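/- (Recursive expression for the MOSES error.) With the zero-padded MOSES iterates Ŷ_{k,r} ∈ ℝ^{n×Kb}, row spaces Q̂_{k,r} = span(Ŷ_{k,r}*), and Q̃_k = Q̂_{k−1,r} ⊕ I_k, it holds for every k ∈ [2:K] that Y_k − Ŷ_{k,r} = (Y_{k−1} − Ŷ_{k−1,r}) + Y_K(P_{Q̃_k} − P_{Q̂_{k,r}}). -/

import Mathlib

open MeasureTheory ProbabilityTheory Matrix

noncomputable def frobNorm {n m : ℕ} (A : Matrix (Fin n) (Fin m) ℝ) : ℝ :=
  Real.sqrt (∑ i, ∑ j, (A i j) ^ 2)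

noncomputable def frobInner {n m : ℕ} (A B : Matrix (Fin n) (Fin m) ℝ) : ℝ :=
  ∑ i, ∑ j, A i j * B i j

noncomputable def specNorm {n m : ℕ} (A : Matrix (Fin n) (Fin m) ℝ) : ℝ :=
  ‖LinearMap.toContinuousLinearMap (Matrix.toEuclideanLin A)‖

noncomputable def singularValue {n m : ℕ} (A : Matrix (Fin n) (Fin m) ℝ) (i : Fin n) : ℝ :=
  Real.sqrt ((Matrix.isHermitian_mul_conjTranspose_self A).eigenvalues
    (Tuple.sort (Matrix.isHermitian_mul_conjTranspose_self A).eigenvalues i.rev))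

noncomputable def residualSq {n m : ℕ} (r : ℕ) (A : Matrix (Fin n) (Fin m) ℝ) : ℝ :=
  ∑ i : Fin n, if r ≤ (i : ℕ) then (singularValue A i) ^ 2 else 0

def IsTruncSVD {n m : ℕ} (r : ℕ) (A Ar : Matrix (Fin n) (Fin m) ℝ) : Prop :=
  Ar.rank ≤ r ∧ ∀ B : Matrix (Fin n) (Fin m) ℝ, B.rank ≤ r →
    frobNorm (A - Ar) ≤ frobNorm (A - B)

noncomputable def colSpan {n m : ℕ} (A : Matrix (Fin n) (Fin m) ℝ) :
    Submodule ℝ (EuclideanSpace ℝ (Fin n)) :=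
  Submodule.span ℝ (Set.range fun j : Fin m =>
    ((WithLp.equiv 2 (Fin n → ℝ)).symm fun i => A i j))

noncomputable def rowSpan {n m : ℕ} (A : Matrix (Fin n) (Fin m) ℝ) :
    Submodule ℝ (EuclideanSpace ℝ (Fin m)) := colSpan Aᵀ

noncomputable def projMatrix {n : ℕ} (U : Submodule ℝ (EuclideanSpace ℝ (Fin n))) :
    Matrix (Fin n) (Fin n) ℝ :=
  Matrix.of fun i j =>
    (U.orthogonalProjectionOnto (EuclideanSpace.single j 1) : EuclideanSpace ℝ (Fin n)) i

noncomputable def coordSubspace {M : ℕ} (s t : ℕ) : Submodule ℝ (EuclideanSpace ℝ (Fin M)) :=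
  Submodule.span ℝ ((fun j : Fin M => (EuclideanSpace.single j (1:ℝ))) ''
    {j : Fin M | s ≤ (j : ℕ) ∧ (j : ℕ) < t})

def padTrunc {n M : ℕ} (A : Matrix (Fin n) (Fin M) ℝ) (m : ℕ) :
    Matrix (Fin n) (Fin M) ℝ :=
  Matrix.of fun i j => if (j : ℕ) < m then A i j else 0

def IsMOSES {n M : ℕ} (r b K : ℕ) (Y : Matrix (Fin n) (Fin M) ℝ)
    (Yhat : ℕ → Matrix (Fin n) (Fin M) ℝ) : Prop :=
  Yhat 0 = 0 ∧ ∀ k, 1 ≤ k → k ≤ K →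
    IsTruncSVD r (Yhat (k - 1) + (padTrunc Y (k * b) - padTrunc Y ((k - 1) * b))) (Yhat k)

noncomputable def stdGaussianSeq (n m : ℕ) : Measure (Fin n → Fin m → ℝ) :=
  Measure.pi fun _ => Measure.pi fun _ => gaussianReal 0 1

noncomputable def gaussianOfRoot {n : ℕ} (A : Matrix (Fin n) (Fin n) ℝ) :
    Measure (EuclideanSpace ℝ (Fin n)) :=
  (Measure.pi fun _ : Fin n => gaussianReal 0 1).map
    (fun g => (WithLp.equiv 2 (Fin n → ℝ)).symm (A.mulVec g))


namespace Stmt9Aux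

variable {n m : ℕ}

noncomputable def rowE (A : Matrix (Fin n) (Fin m) ℝ) (i : Fin n) : EuclideanSpace ℝ (Fin m) :=
  (WithLp.equiv 2 (Fin m → ℝ)).symm (A i)

lemma rowE_apply (A : Matrix (Fin n) (Fin m) ℝ) (i : Fin n) (j : Fin m) :
    rowE A i j = A i j := rfl

lemma rowE_add (A B : Matrix (Fin n) (Fin m) ℝ) (i : Fin n) :
    rowE (A + B) i = rowE A i + rowE B i := rfl

lemma rowE_sub (A B : Matrix (Fin n) (Fin m) ℝ) (i : Fin n) :
    rowE (A - B) i = rowE A i - rowE B i := rfl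

lemma rowE_mem_rowSpan (A : Matrix (Fin n) (Fin m) ℝ) (i : Fin n) :
    rowE A i ∈ rowSpan A :=
  Submodule.subset_span ⟨i, rfl⟩

lemma rowSpan_le_iff {A : Matrix (Fin n) (Fin m) ℝ}
    {U : Submodule ℝ (EuclideanSpace ℝ (Fin m))} (h : ∀ i, rowE A i ∈ U) :
    rowSpan A ≤ U := by
  apply Submodule.span_le.mpr
  rintro x ⟨i, rfl⟩
  exact h i

lemma mul_projMatrix_apply (A : Matrix (Fin n) (Fin m) ℝ)
    (U : Submodule ℝ (EuclideanSpace ℝ (Fin m))) (i : Fin n) (j : Fin m) :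
    (A * projMatrix U) i j
      = (U.orthogonalProjectionOnto (rowE A i) : EuclideanSpace ℝ (Fin m)) j := by
  have h1 : (A * projMatrix U) i j
      = (inner ℝ (rowE A i) ((U.orthogonalProjectionOnto (EuclideanSpace.single j 1) : EuclideanSpace ℝ (Fin m))) : ℝ) := by
    rw [Matrix.mul_apply, PiLp.inner_apply]
    simp [projMatrix, rowE_apply]
    exact Finset.sum_congr rfl fun _ _ => mul_comm _ _
  rw [h1, ← Submodule.starProjection_apply U (EuclideanSpace.single j 1),
    ← Submodule.inner_starProjection_left_eq_right,
    EuclideanSpace.inner_single_right]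
  simp

lemma rowE_mul_projMatrix (A : Matrix (Fin n) (Fin m) ℝ)
    (U : Submodule ℝ (EuclideanSpace ℝ (Fin m))) (i : Fin n) :
    rowE (A * projMatrix U) i
      = (U.orthogonalProjectionOnto (rowE A i) : EuclideanSpace ℝ (Fin m)) := by
  ext j
  exact mul_projMatrix_apply A U i j

lemma mul_projMatrix_eq_self {A : Matrix (Fin n) (Fin m) ℝ}
    {U : Submodule ℝ (EuclideanSpace ℝ (Fin m))} (h : ∀ i, rowE A i ∈ U) :
    A * projMatrix U = A := by
  ext i j
  rw [mul_projMatrix_apply, ← Submodule.starProjection_apply,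
    Submodule.starProjection_eq_self_iff.mpr (h i)]
  rfl

lemma mul_projMatrix_eq_zero {A : Matrix (Fin n) (Fin m) ℝ}
    {U : Submodule ℝ (EuclideanSpace ℝ (Fin m))} (h : ∀ i, rowE A i ∈ Uᗮ) :
    A * projMatrix U = 0 := by
  ext i j
  rw [mul_projMatrix_apply,
    Submodule.orthogonalProjectionOnto_apply_of_mem_orthogonal (h i)]
  rfl

def sqF (A : Matrix (Fin n) (Fin m) ℝ) : ℝ := ∑ i, ∑ j, (A i j) ^ 2

lemma sqF_nonneg (A : Matrix (Fin n) (Fin m) ℝ) : 0 ≤ sqF A :=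
  Finset.sum_nonneg fun _ _ => Finset.sum_nonneg fun _ _ => sq_nonneg _

lemma frobNorm_le_frobNorm_iff {A B : Matrix (Fin n) (Fin m) ℝ} :
    frobNorm A ≤ frobNorm B ↔ sqF A ≤ sqF B := by
  unfold frobNorm
  rw [show (∑ i, ∑ j, (A i j)^2) = sqF A from rfl,
      show (∑ i, ∑ j, (B i j)^2) = sqF B from rfl]
  constructor
  · intro h
    nlinarith [Real.sq_sqrt (sqF_nonneg A), Real.sq_sqrt (sqF_nonneg B),
      Real.sqrt_nonneg (sqF A), Real.sqrt_nonneg (sqF B)]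
  · exact fun h => Real.sqrt_le_sqrt h

lemma eq_zero_of_sqF_nonpos {A : Matrix (Fin n) (Fin m) ℝ} (h : sqF A ≤ 0) : A = 0 := by
  have hz : sqF A = 0 := le_antisymm h (sqF_nonneg A)
  ext i j
  have h1 : ∀ i ∈ Finset.univ, (0:ℝ) ≤ ∑ j, (A i j)^2 :=
    fun _ _ => Finset.sum_nonneg fun _ _ => sq_nonneg _
  have h2 := (Finset.sum_eq_zero_iff_of_nonneg h1).mp hz i (Finset.mem_univ i)
  have h3 := (Finset.sum_eq_zero_iff_of_nonneg
    (fun _ _ => sq_nonneg (A i _))).mp h2 j (Finset.mem_univ j)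
  simpa using pow_eq_zero_iff (n := 2) (by norm_num) |>.mp h3

lemma sqF_add_of_orth {X Z : Matrix (Fin n) (Fin m) ℝ}
    (h : ∀ i, (∑ j, X i j * Z i j) = 0) : sqF (X + Z) = sqF X + sqF Z := by
  unfold sqF
  rw [← Finset.sum_add_distrib]
  apply Finset.sum_congr rfl
  intro i _
  have h4 : ∑ j, ((X + Z) i j)^2 = ∑ j, ((X i j)^2 + (Z i j)^2 + 2 * (X i j * Z i j)) := by
    apply Finset.sum_congr rfl; intro j _; simp [Matrix.add_apply]; ring
  rw [h4]
  simp [Finset.sum_add_distrib, ← Finset.mul_sum, h i]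

lemma rank_eq_finrank_rowSpan (A : Matrix (Fin n) (Fin m) ℝ) :
    A.rank = Module.finrank ℝ (rowSpan A) := by
  have h1 : A.rank = Module.finrank ℝ (Submodule.span ℝ (Set.range A)) :=
    Matrix.rank_eq_finrank_span_row A
  have h2 : rowSpan A = Submodule.map (EuclideanSpace.equiv (Fin m) ℝ).symm.toLinearEquiv.toLinearMap
      (Submodule.span ℝ (Set.range A)) := by
    rw [Submodule.map_span]
    unfold rowSpan colSpan
    congr 1
    exact Set.range_comp (f := A) _
  rw [h1, h2]
  exact (LinearEquiv.finrank_map_eq _ _).symm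

lemma inner_rowE (x y : EuclideanSpace ℝ (Fin m)) :
    (inner ℝ x y : ℝ) = ∑ j, x j * y j := by
  rw [PiLp.inner_apply]
  simp [RCLike.inner_apply]
  exact Finset.sum_congr rfl fun _ _ => mul_comm _ _

lemma euclid_eq_sum_single (x : EuclideanSpace ℝ (Fin m)) :
    x = ∑ j, x j • EuclideanSpace.single j (1:ℝ) := by
  ext l
  have h : (∑ j, x j • EuclideanSpace.single j (1:ℝ)) l
      = ∑ j, x j * (EuclideanSpace.single j (1:ℝ)) l := by
    rw [WithLp.ofLp_sum, Finset.sum_apply]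
    rfl
  rw [h]
  simp [EuclideanSpace.single_apply]

lemma coordSubspace_apply_eq_zero {M s t : ℕ} {x : EuclideanSpace ℝ (Fin M)}
    (hx : x ∈ coordSubspace s t) (j : Fin M) (hj : (j:ℕ) < s ∨ t ≤ (j:ℕ)) : x j = 0 := by
  induction hx using Submodule.span_induction with
  | mem u hu =>
    obtain ⟨l, ⟨hl1, hl2⟩, rfl⟩ := hu
    show EuclideanSpace.single l (1:ℝ) j = 0
    rw [EuclideanSpace.single_apply]
    have hne : j ≠ l := by
      intro h; subst h; omega
    simp [hne]
  | zero => rfl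
  | add u v _ _ h1 h2 =>
    have h3 : (u + v) j = u j + v j := rfl
    rw [h3, h1, h2, add_zero]
  | smul a u _ h1 =>
    have h3 : (a • u) j = a * u j := rfl
    rw [h3, h1, mul_zero]

lemma mem_orthogonal_coordSubspace {M s t : ℕ} {y : EuclideanSpace ℝ (Fin M)}
    (h : ∀ j : Fin M, s ≤ (j:ℕ) → (j:ℕ) < t → y j = 0) : y ∈ (coordSubspace s t)ᗮ := by
  rw [Submodule.mem_orthogonal]
  intro u hu
  induction hu using Submodule.span_induction with
  | mem u hu' =>
    obtain ⟨l, ⟨hl1, hl2⟩, rfl⟩ := hu'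
    rw [EuclideanSpace.inner_single_left]
    simp [h l hl1 hl2]
  | zero => simp
  | add u v _ _ h1 h2 => rw [inner_add_left, h1, h2, add_zero]
  | smul a u _ h1 => rw [inner_smul_left, h1, mul_zero]

lemma mem_coordSubspace_of_support {M s t : ℕ} {x : EuclideanSpace ℝ (Fin M)}
    (h : ∀ j : Fin M, ((j:ℕ) < s ∨ t ≤ (j:ℕ)) → x j = 0) : x ∈ coordSubspace s t := by
  rw [euclid_eq_sum_single x]
  apply Submodule.sum_mem
  intro j _
  by_cases hj : s ≤ (j:ℕ) ∧ (j:ℕ) < t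
  · exact Submodule.smul_mem _ _ (Submodule.subset_span ⟨j, hj, rfl⟩)
  · have hx : x j = 0 := h j (by omega)
    rw [hx, zero_smul]
    exact Submodule.zero_mem _

lemma coordSubspace_mono {M : ℕ} {s s' t t' : ℕ} (hs : s' ≤ s) (ht : t ≤ t') :
    (coordSubspace s t : Submodule ℝ (EuclideanSpace ℝ (Fin M))) ≤ coordSubspace s' t' :=
  Submodule.span_mono (Set.image_mono (fun j hj => ⟨le_trans hs hj.1, lt_of_lt_of_le hj.2 ht⟩))

lemma inner_eq_zero_of_UperpU {U : Submodule ℝ (EuclideanSpace ℝ (Fin m))}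
    {x z : EuclideanSpace ℝ (Fin m)} (hx : x ∈ Uᗮ) (hz : z ∈ U) :
    ∑ j, x j * z j = 0 := by
  rw [← inner_rowE x z]
  exact Submodule.inner_left_of_mem_orthogonal hz hx

lemma truncSVD_eq_mul_proj {r : ℕ} {A Ar : Matrix (Fin n) (Fin m) ℝ}
    (h : IsTruncSVD r A Ar) : Ar = A * projMatrix (rowSpan Ar) := by
  set U := rowSpan Ar with hU
  set B := A * projMatrix U with hB
  have hrowB : ∀ i, rowE B i
      = (U.orthogonalProjectionOnto (rowE A i) : EuclideanSpace ℝ (Fin m)) :=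
    rowE_mul_projMatrix A U
  have hBle : rowSpan B ≤ U := rowSpan_le_iff fun i => by
    rw [hrowB]; exact Submodule.coe_mem _
  have hBrank : B.rank ≤ r := by
    have h1 : B.rank ≤ Ar.rank := by
      rw [rank_eq_finrank_rowSpan B, rank_eq_finrank_rowSpan Ar]
      exact Submodule.finrank_mono hBle
    exact le_trans h1 h.1
  have hmin := frobNorm_le_frobNorm_iff.mp (h.2 B hBrank)
  have horth : ∀ i, ∑ j, (A - B) i j * (B - Ar) i j = 0 := by
    intro i
    have hx : rowE (A - B) i ∈ Uᗮ := by
      rw [rowE_sub, hrowB]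
      exact Submodule.sub_starProjection_mem_orthogonal _
    have hz : rowE (B - Ar) i ∈ U := by
      rw [rowE_sub, hrowB]
      exact U.sub_mem (Submodule.coe_mem _) (rowE_mem_rowSpan Ar i)
    exact inner_eq_zero_of_UperpU hx hz
  have hsum : sqF (A - Ar) = sqF (A - B) + sqF (B - Ar) := by
    have hd : A - Ar = (A - B) + (B - Ar) := by abel
    rw [hd, sqF_add_of_orth horth]
  have hzz : B - Ar = 0 := eq_zero_of_sqF_nonpos (by linarith)
  exact (sub_eq_zero.mp hzz).symm

lemma truncSVD_proj_fix {r : ℕ} {A Ar : Matrix (Fin n) (Fin m) ℝ}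
    (h : IsTruncSVD r A Ar) {S : Submodule ℝ (EuclideanSpace ℝ (Fin m))}
    (hA : A * projMatrix S = A) : Ar * projMatrix S = Ar := by
  set P := projMatrix S with hP
  set B := Ar * P with hB
  have hBrank : B.rank ≤ r := le_trans (Matrix.rank_mul_le_left Ar P) h.1
  have hAB : A - B = (A - Ar) * P := by rw [Matrix.sub_mul, hA]
  have hmin := frobNorm_le_frobNorm_iff.mp (h.2 B hBrank)
  rw [hAB] at hmin
  have horth : ∀ i, ∑ j, ((A - Ar) * P) i j * ((A - Ar) - (A - Ar) * P) i j = 0 := by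
    intro i
    have hz : rowE ((A - Ar) * P) i ∈ S := by
      rw [hP, rowE_mul_projMatrix]
      exact Submodule.coe_mem _
    have hx : rowE ((A - Ar) - (A - Ar) * P) i ∈ Sᗮ := by
      rw [rowE_sub, hP, rowE_mul_projMatrix]
      exact Submodule.sub_starProjection_mem_orthogonal _
    rw [show (∑ j, ((A - Ar) * P) i j * ((A - Ar) - (A - Ar) * P) i j) =
      inner ℝ (rowE ((A - Ar) * P) i) (rowE ((A - Ar) - (A - Ar) * P) i) from
      (inner_rowE (rowE ((A - Ar) * P) i) (rowE ((A - Ar) - (A - Ar) * P) i)).symm]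
    exact Submodule.inner_right_of_mem_orthogonal hz hx
  have hsum : sqF (A - Ar) = sqF ((A - Ar) * P) + sqF ((A - Ar) - (A - Ar) * P) := by
    have hd : A - Ar = ((A - Ar) * P) + ((A - Ar) - (A - Ar) * P) := by abel
    nth_rewrite 1 [hd]
    rw [sqF_add_of_orth horth]
  have hzz : (A - Ar) - (A - Ar) * P = 0 := eq_zero_of_sqF_nonpos (by linarith)
  have h1 : (A - Ar) * P = A - Ar := (sub_eq_zero.mp hzz).symm
  rw [Matrix.sub_mul, hA] at h1
  exact sub_right_injective h1

end Stmt9Aux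

/-- Recursive expression for the MOSES error: with the zero-padded MOSES
iterates `Ŷ_{k,r} ∈ ℝ^{n×Kb}`, row spaces `Q̂_{k,r} = span(Ŷ_{k,r}*)` and
`Q̃_k = Q̂_{k−1,r} ⊕ I_k`, for every `k ∈ [2:K]`:
`Y_k − Ŷ_{k,r} = (Y_{k−1} − Ŷ_{k−1,r}) + Y_K(P_{Q̃_k} − P_{Q̂_{k,r}})`. -/
theorem stmt9 (n M r b K : ℕ) (hM : M = K * b)
    (Y : Matrix (Fin n) (Fin M) ℝ)
    (Yhat : ℕ → Matrix (Fin n) (Fin M) ℝ) (hmoses : IsMOSES r b K Y Yhat) :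
    ∀ k, 2 ≤ k → k ≤ K →
      padTrunc Y (k * b) - Yhat k =
        (padTrunc Y ((k - 1) * b) - Yhat (k - 1)) +
          Y * (projMatrix (rowSpan (Yhat (k - 1)) ⊔ coordSubspace ((k - 1) * b) (k * b)) -
               projMatrix (rowSpan (Yhat k))) := by
  obtain ⟨h0, hsvd⟩ := hmoses
  have main : ∀ k, k ≤ K →
      (∀ (i : Fin n) (j : Fin M), k * b ≤ (j:ℕ) → Yhat k i j = 0) ∧
      (∀ i, Stmt9Aux.rowE (padTrunc Y (k*b) - Yhat k) i ∈ (rowSpan (Yhat k))ᗮ) ∧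
      (1 ≤ k → Y * (projMatrix (rowSpan (Yhat (k-1)) ⊔ coordSubspace ((k-1)*b) (k*b)) -
               projMatrix (rowSpan (Yhat k))) =
               (Yhat (k-1) + (padTrunc Y (k*b) - padTrunc Y ((k-1)*b))) - Yhat k) := by
    intro k
    induction k with
    | zero =>
      intro _
      refine ⟨?_, ?_, ?_⟩
      · intro i j _
        rw [h0]
        rfl
      · intro i
        have hz : padTrunc Y (0*b) - Yhat 0 = 0 := by
          rw [h0]
          ext i j
          simp [padTrunc]
        rw [hz]
        have hz2 : Stmt9Aux.rowE (0 : Matrix (Fin n) (Fin M) ℝ) i = 0 := rfl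
        rw [hz2]
        exact Submodule.zero_mem _
      · intro h1
        exact absurd h1 (by omega)
    | succ m ih =>
      intro hm1
      simp only [Nat.add_sub_cancel]
      obtain ⟨ha, hb, _⟩ := ih (by omega)
      have hk := hsvd (m+1) (by omega) hm1
      simp only [Nat.add_sub_cancel] at hk
      set Δ : Matrix (Fin n) (Fin M) ℝ := padTrunc Y ((m+1)*b) - padTrunc Y (m*b) with hΔ
      set A : Matrix (Fin n) (Fin M) ℝ := Yhat m + Δ with hA
      have hmb : m * b ≤ (m+1) * b := Nat.mul_le_mul_right b (by omega)
      have hΔsupp : ∀ (i : Fin n) (j : Fin M), ¬ (m*b ≤ (j:ℕ) ∧ (j:ℕ) < (m+1)*b) → Δ i j = 0 := by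
        intro i j hj
        show padTrunc Y ((m+1)*b) i j - padTrunc Y (m*b) i j = 0
        simp only [padTrunc, Matrix.of_apply]
        split_ifs with h1 h2
        · exact sub_self _
        · exact absurd ⟨by omega, h1⟩ hj
        · omega
        · exact sub_self 0
      have hArows_supp : ∀ i, Stmt9Aux.rowE A i
          ∈ (coordSubspace 0 ((m+1)*b) : Submodule ℝ (EuclideanSpace ℝ (Fin M))) := by
        intro i
        apply Stmt9Aux.mem_coordSubspace_of_support
        intro j hj
        have hj' : (m+1)*b ≤ (j:ℕ) := by omega
        show A i j = 0
        rw [hA, Matrix.add_apply, ha i j (le_trans hmb hj'), hΔsupp i j (by omega), add_zero]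
      have hAC : A * projMatrix (coordSubspace 0 ((m+1)*b)) = A :=
        Stmt9Aux.mul_projMatrix_eq_self hArows_supp
      have hYhC : Yhat (m+1) * projMatrix (coordSubspace 0 ((m+1)*b)) = Yhat (m+1) :=
        Stmt9Aux.truncSVD_proj_fix hk hAC
      have ha' : ∀ (i : Fin n) (j : Fin M), (m+1)*b ≤ (j:ℕ) → Yhat (m+1) i j = 0 := by
        intro i j hj
        have hmem : Stmt9Aux.rowE (Yhat (m+1)) i ∈
            (coordSubspace 0 ((m+1)*b) : Submodule ℝ (EuclideanSpace ℝ (Fin M))) := by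
          have hc := congrArg (fun B => Stmt9Aux.rowE B i) hYhC
          replace hc := (Stmt9Aux.rowE_mul_projMatrix (Yhat (m+1)) (coordSubspace 0 ((m+1)*b)) i).symm.trans hc
          rw [← hc]
          exact Submodule.coe_mem _
        exact Stmt9Aux.coordSubspace_apply_eq_zero hmem j (Or.inr hj)
      set Qt : Submodule ℝ (EuclideanSpace ℝ (Fin M)) :=
        rowSpan (Yhat m) ⊔ coordSubspace (m*b) ((m+1)*b) with hQt
      set Qh : Submodule ℝ (EuclideanSpace ℝ (Fin M)) := rowSpan (Yhat (m+1)) with hQh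
      have hArows_Qt : ∀ i, Stmt9Aux.rowE A i ∈ Qt := by
        intro i
        rw [hA, Stmt9Aux.rowE_add]
        apply Submodule.add_mem
        · exact Submodule.mem_sup_left (Stmt9Aux.rowE_mem_rowSpan _ i)
        · apply Submodule.mem_sup_right
          apply Stmt9Aux.mem_coordSubspace_of_support
          intro j hj
          exact hΔsupp i j (by omega)
      have hAQt : A * projMatrix Qt = A := Stmt9Aux.mul_projMatrix_eq_self hArows_Qt
      have hQle : Qh ≤ Qt := by
        apply Stmt9Aux.rowSpan_le_iff
        intro i
        have hYQt : Yhat (m+1) * projMatrix Qt = Yhat (m+1) :=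
          Stmt9Aux.truncSVD_proj_fix hk hAQt
        have hc := congrArg (fun B => Stmt9Aux.rowE B i) hYQt
        replace hc := (Stmt9Aux.rowE_mul_projMatrix (Yhat (m+1)) Qt i).symm.trans hc
        rw [← hc]
        exact Submodule.coe_mem _
      have hL1 : Yhat (m+1) = A * projMatrix Qh := Stmt9Aux.truncSVD_eq_mul_proj hk
      set R : Matrix (Fin n) (Fin M) ℝ := padTrunc Y (m*b) - Yhat m with hR
      have hRrows : ∀ i, Stmt9Aux.rowE R i ∈ Qtᗮ := by
        intro i
        rw [hQt, ← Submodule.inf_orthogonal]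
        refine ⟨hb i, ?_⟩
        apply Stmt9Aux.mem_orthogonal_coordSubspace
        intro j hj1 hj2
        show R i j = 0
        rw [hR, Matrix.sub_apply, ha i j hj1]
        have hn : ¬ ((j:ℕ) < m*b) := by omega
        simp [padTrunc, hn]
      have hbnew : ∀ i, Stmt9Aux.rowE (padTrunc Y ((m+1)*b) - Yhat (m+1)) i ∈ Qhᗮ := by
        intro i
        have hdecomp : padTrunc Y ((m+1)*b) - Yhat (m+1) = R + (A - Yhat (m+1)) := by
          rw [hR, hA, hΔ]; abel
        rw [hdecomp, Stmt9Aux.rowE_add]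
        apply Submodule.add_mem
        · exact Submodule.orthogonal_le hQle (hRrows i)
        · rw [Stmt9Aux.rowE_sub, hL1, Stmt9Aux.rowE_mul_projMatrix]
          exact Submodule.sub_starProjection_mem_orthogonal _
      set S : Matrix (Fin n) (Fin M) ℝ := Y - padTrunc Y ((m+1)*b) with hS
      have hQtC : Qt ≤ coordSubspace 0 ((m+1)*b) := by
        rw [hQt]
        apply sup_le
        · apply Stmt9Aux.rowSpan_le_iff
          intro i
          apply Stmt9Aux.mem_coordSubspace_of_support
          intro j hj
          have h1 : (m+1)*b ≤ (j:ℕ) := by omega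
          exact ha i j (le_trans hmb h1)
        · exact Stmt9Aux.coordSubspace_mono (by omega) (le_refl _)
      have hSrows : ∀ i, Stmt9Aux.rowE S i ∈ Qtᗮ := by
        intro i
        apply Submodule.orthogonal_le hQtC
        apply Stmt9Aux.mem_orthogonal_coordSubspace
        intro j hj1 hj2
        show S i j = 0
        rw [hS, Matrix.sub_apply]
        simp [padTrunc, hj2]
      have hYdecomp : Y = S + R + A := by rw [hS, hR, hA, hΔ]; abel
      have hdnew : Y * (projMatrix Qt - projMatrix Qh) = A - Yhat (m+1) := by
        have hSQt : S * projMatrix Qt = 0 := Stmt9Aux.mul_projMatrix_eq_zero hSrows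
        have hSQh : S * projMatrix Qh = 0 :=
          Stmt9Aux.mul_projMatrix_eq_zero (fun i => Submodule.orthogonal_le hQle (hSrows i))
        have hRQt : R * projMatrix Qt = 0 := Stmt9Aux.mul_projMatrix_eq_zero hRrows
        have hRQh : R * projMatrix Qh = 0 :=
          Stmt9Aux.mul_projMatrix_eq_zero (fun i => Submodule.orthogonal_le hQle (hRrows i))
        rw [hYdecomp, Matrix.mul_sub,
          show (S + R + A) * projMatrix Qt
              = S * projMatrix Qt + R * projMatrix Qt + A * projMatrix Qt by
            rw [Matrix.add_mul, Matrix.add_mul],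
          show (S + R + A) * projMatrix Qh
              = S * projMatrix Qh + R * projMatrix Qh + A * projMatrix Qh by
            rw [Matrix.add_mul, Matrix.add_mul],
          hSQt, hSQh, hRQt, hRQh, hAQt, ← hL1]
        abel
      exact ⟨ha', hbnew, fun _ => hdnew⟩
  intro k hk2 hkK
  obtain ⟨_, _, hd⟩ := main k hkK
  rw [hd (by omega)]
  abel
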